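/- Let G be a finitely generated group, p a prime, and x ∈ G. Then RG_p(G/⟨⟨x⟩⟩) ≥ RG_p(G) - 1, where ⟨⟨x⟩⟩ is the normal closure of x in G. -/

import Mathlib

/-- `dGen G` is the minimal number of generators of the group `G`. -/
noncomputable def dGen (G : Type*) [Group G] : ℕ :=
  sInf {n : ℕ | ∃ S : Finset G, S.card = n ∧ Subgroup.closure (S : Set G) = ⊤}

/-- The rank gradient of `G`. -/
noncomputable def rankGradient (G : Type*) [Group G] : ℝ :=
  sInf {r : ℝ | ∃ H : Subgroup G, H.index ≠ 0 ∧ r = ((dGen H : ℝ) - 1) / (H.index : ℝ)}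

open scoped commutatorElement

/-- The subgroup `[G,G]G^p` of `G` (as a normal closure of its generators). -/
def pCommPow (p : ℕ) (G : Type*) [Group G] : Subgroup G :=
  Subgroup.normalClosure ({x | ∃ a b : G, x = ⁅a, b⁆} ∪ {x | ∃ g : G, x = g ^ p})

instance pCommPow_normal (p : ℕ) (G : Type*) [Group G] : (pCommPow p G).Normal :=
  Subgroup.normalClosure_normal

/-- `d_p(G) = d(G/([G,G]G^p))`. -/
noncomputable def dp (p : ℕ) (G : Type*) [Group G] : ℕ :=
  dGen (G ⧸ pCommPow p G)

/-- The `p`-gradient of `G`. -/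
noncomputable def pGradient (p : ℕ) (G : Type*) [Group G] : ℝ :=
  sInf {r : ℝ | ∃ H : Subgroup G, H.Normal ∧ (∃ k : ℕ, H.index = p ^ k) ∧
    r = ((dp p H : ℝ) - 1) / (H.index : ℝ)}

/-- The `p`-residual: intersection of all normal subgroups of `p`-power index. -/
def pResidual (p : ℕ) (G : Type*) [Group G] : Subgroup G :=
  ⨅ H ∈ {H : Subgroup G | H.Normal ∧ ∃ k : ℕ, H.index = p ^ k}, H

instance pResidual_normal (p : ℕ) (G : Type*) [Group G] : (pResidual p G).Normal := by
  constructor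
  intro n hn g
  simp only [pResidual, Subgroup.mem_iInf] at hn ⊢
  intro H hH
  exact hH.1.conj_mem n (hn H hH) g


-- AUX START
lemma dGen_le {A : Type*} [Group A] (S : Finset A) (h : Subgroup.closure (S : Set A) = ⊤) :
    dGen A ≤ S.card :=
  Nat.sInf_le ⟨S, rfl, h⟩

lemma exists_dGen (A : Type*) [Group A] [h : Group.FG A] :
    ∃ S : Finset A, S.card = dGen A ∧ Subgroup.closure (S : Set A) = ⊤ := by
  have hne : {n : ℕ | ∃ S : Finset A, S.card = n ∧ Subgroup.closure (S : Set A) = ⊤}.Nonempty := by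
    obtain ⟨S, htop, hfin⟩ := Group.fg_iff.mp h
    exact ⟨hfin.toFinset.card, hfin.toFinset, rfl, by rwa [Set.Finite.coe_toFinset]⟩
  obtain ⟨S, hc, ht⟩ := Nat.sInf_mem hne
  exact ⟨S, hc, ht⟩

lemma dGen_exists_of_equiv {A B : Type*} [Group A] [Group B] (e : A ≃* B) (n : ℕ)
    (h : ∃ S : Finset A, S.card = n ∧ Subgroup.closure (S : Set A) = ⊤) :
    ∃ S : Finset B, S.card = n ∧ Subgroup.closure (S : Set B) = ⊤ := by
  classical
  obtain ⟨S, hc, ht⟩ := h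
  refine ⟨S.image e, by rw [Finset.card_image_of_injective _ e.injective, hc], ?_⟩
  have h2 : Subgroup.map e.toMonoidHom ⊤ = ⊤ :=
    Subgroup.map_top_of_surjective _ e.surjective
  rw [Finset.coe_image, show (⇑e '' (S : Set A)) = ⇑e.toMonoidHom '' (S : Set A) from rfl,
    ← MonoidHom.map_closure, ht, h2]

lemma dGen_eq_of_mulEquiv {A B : Type*} [Group A] [Group B] (e : A ≃* B) :
    dGen A = dGen B := by
  unfold dGen
  congr 1
  ext n
  exact ⟨dGen_exists_of_equiv e n, dGen_exists_of_equiv e.symm n⟩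

lemma map_pCommPow {A B : Type*} [Group A] [Group B] (p : ℕ) (f : A →* B)
    (hf : Function.Surjective f) :
    Subgroup.map f (pCommPow p A) = pCommPow p B := by
  unfold pCommPow
  rw [Subgroup.map_normalClosure _ f hf]
  congr 1
  rw [Set.image_union]
  congr 1
  · ext y
    constructor
    · rintro ⟨z, ⟨a, b, rfl⟩, rfl⟩
      exact ⟨f a, f b, map_commutatorElement f a b⟩
    · rintro ⟨a, b, rfl⟩
      obtain ⟨a', rfl⟩ := hf a
      obtain ⟨b', rfl⟩ := hf b
      exact ⟨⁅a', b'⁆, ⟨a', b', rfl⟩, map_commutatorElement f a' b'⟩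
  · ext y
    constructor
    · rintro ⟨z, ⟨g, rfl⟩, rfl⟩
      exact ⟨f g, map_pow f g p⟩
    · rintro ⟨g, rfl⟩
      obtain ⟨g', rfl⟩ := hf g
      exact ⟨g' ^ p, ⟨g', rfl⟩, map_pow f g' p⟩

lemma dp_eq_of_mulEquiv {A B : Type*} [Group A] [Group B] (p : ℕ) (e : A ≃* B) :
    dp p A = dp p B :=
  dGen_eq_of_mulEquiv
    (QuotientGroup.congr (pCommPow p A) (pCommPow p B) e
      (map_pCommPow p e.toMonoidHom e.surjective))

lemma pQuot_comm (p : ℕ) (A : Type*) [Group A] (a b : A ⧸ pCommPow p A) :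
    a * b = b * a := by
  obtain ⟨x, rfl⟩ := QuotientGroup.mk_surjective a
  obtain ⟨y, rfl⟩ := QuotientGroup.mk_surjective b
  show QuotientGroup.mk (x * y) = QuotientGroup.mk (y * x)
  refine QuotientGroup.eq.mpr ?_
  apply Subgroup.subset_normalClosure
  left
  exact ⟨y⁻¹, x⁻¹, by group⟩

lemma normalClosure_eq_closure_of_comm {A : Type*} [Group A]
    (hc : ∀ a b : A, a * b = b * a) (s : Set A) :
    Subgroup.normalClosure s = Subgroup.closure s := by
  haveI : (Subgroup.closure s).Normal := by
    constructor
    intro n hn g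
    have : g * n * g⁻¹ = n := by rw [hc g n, mul_assoc]; group
    rwa [this]
  exact le_antisymm (Subgroup.normalClosure_le_normal Subgroup.subset_closure)
    ((Subgroup.closure_le _).mpr Subgroup.subset_normalClosure)

lemma dGen_le_of_ker_closure {A B : Type*} [Group A] [Group B] [Group.FG B]
    (f : A →* B) (hf : Function.Surjective f) (S : Finset A)
    (hker : f.ker = Subgroup.closure (S : Set A)) :
    dGen A ≤ dGen B + S.card := by
  classical
  obtain ⟨T, hTc, hTtop⟩ := exists_dGen B
  set g := Function.surjInv hf with hg
  set T' : Finset A := T.image g with hT'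
  have hcl : Subgroup.closure ((T' ∪ S : Finset A) : Set A) = ⊤ := by
    rw [eq_top_iff]
    intro a _
    set C := Subgroup.closure ((T' ∪ S : Finset A) : Set A) with hC
    have hSC : f.ker ≤ C := by
      rw [hker]
      apply Subgroup.closure_mono
      intro y hy
      simp only [Finset.coe_union, Set.mem_union]
      exact Or.inr hy
    have hTC : Subgroup.closure (T : Set B) ≤ Subgroup.map f C := by
      rw [Subgroup.closure_le]
      intro b hb
      refine ⟨g b, Subgroup.subset_closure ?_, Function.surjInv_eq hf b⟩
      simp only [Finset.coe_union, Set.mem_union]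
      exact Or.inl (by simp only [hT', Finset.coe_image]; exact ⟨b, hb, rfl⟩)
    have hfa : f a ∈ Subgroup.map f C := hTC (hTtop ▸ Subgroup.mem_top (f a))
    obtain ⟨c, hc, hfc⟩ := hfa
    have hk : c⁻¹ * a ∈ f.ker := by
      rw [MonoidHom.mem_ker, map_mul, map_inv, hfc]
      group
    have : a = c * (c⁻¹ * a) := by group
    rw [this]
    exact C.mul_mem hc (hSC hk)
  calc dGen A ≤ (T' ∪ S).card := dGen_le _ hcl
    _ ≤ T'.card + S.card := Finset.card_union_le _ _
    _ ≤ T.card + S.card := by gcongr; exact Finset.card_image_le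
    _ = dGen B + S.card := by rw [hTc]

lemma dp_le_quot (p : ℕ) {A : Type*} [Group A] (M : Subgroup A) [M.Normal]
    (S : Finset A) (hM : M = Subgroup.normalClosure (S : Set A))
    [Group.FG (A ⧸ M)] :
    dp p A ≤ dp p (A ⧸ M) + S.card := by
  classical
  set P := pCommPow p A with hP
  set P' := pCommPow p (A ⧸ M) with hP'
  have hmap : Subgroup.map (QuotientGroup.mk' M) P = P' :=
    map_pCommPow p _ (QuotientGroup.mk'_surjective M)
  have hle : P ≤ Subgroup.comap (QuotientGroup.mk' M) P' :=
    Subgroup.map_le_iff_le_comap.mp hmap.le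
  set f := QuotientGroup.map P P' (QuotientGroup.mk' M) hle with hf
  have hfsurj : Function.Surjective f := by
    intro w
    obtain ⟨b, rfl⟩ := QuotientGroup.mk_surjective w
    obtain ⟨a, rfl⟩ := QuotientGroup.mk_surjective b
    exact ⟨QuotientGroup.mk a, QuotientGroup.map_mk _ _ _ _ a⟩
  have hcomp : f.comp (QuotientGroup.mk' P) =
      (QuotientGroup.mk' P').comp (QuotientGroup.mk' M) := by
    ext a
    simp [hf, QuotientGroup.map_mk]
  have hcom1 : Subgroup.comap (QuotientGroup.mk' P) f.ker = P ⊔ M := by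
    rw [MonoidHom.comap_ker, hcomp, ← MonoidHom.comap_ker, QuotientGroup.ker_mk', ← hmap,
      Subgroup.comap_map_eq, QuotientGroup.ker_mk']
  have hker : f.ker = Subgroup.map (QuotientGroup.mk' P) M := by
    rw [← Subgroup.map_comap_eq_self_of_surjective (QuotientGroup.mk'_surjective P) f.ker, hcom1,
      Subgroup.map_sup, (Subgroup.map_eq_bot_iff _).mpr (by rw [QuotientGroup.ker_mk']),
      bot_sup_eq]
  have hker2 : f.ker = Subgroup.closure ((QuotientGroup.mk' P) '' (S : Set A)) := by
    rw [hker, hM, Subgroup.map_normalClosure _ _ (QuotientGroup.mk'_surjective P),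
      normalClosure_eq_closure_of_comm (fun a b => pQuot_comm p A a b)]
  haveI : Group.FG ((A ⧸ M) ⧸ P') := Group.fg_of_surjective (QuotientGroup.mk'_surjective P')
  have hmain := dGen_le_of_ker_closure f hfsurj (S.image (QuotientGroup.mk' P))
    (by rw [Finset.coe_image]; exact hker2)
  have hcard : (S.image (QuotientGroup.mk' P)).card ≤ S.card := Finset.card_image_le
  show dGen (A ⧸ pCommPow p A) ≤ dGen ((A ⧸ M) ⧸ pCommPow p (A ⧸ M)) + S.card
  exact hmain.trans (Nat.add_le_add_left hcard _)

lemma pGradient_set_bddBelow {A : Type*} [Group A] {p : ℕ} (hp : p.Prime) :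
    ∀ r ∈ {r : ℝ | ∃ H : Subgroup A, H.Normal ∧ (∃ k : ℕ, H.index = p ^ k) ∧
      r = ((dp p H : ℝ) - 1) / (H.index : ℝ)}, (-1 : ℝ) ≤ r := by
  rintro r ⟨H, -, ⟨k, hk⟩, rfl⟩
  have h0 : H.index ≠ 0 := by rw [hk]; exact pow_ne_zero _ hp.pos.ne'
  have h1 : (1 : ℝ) ≤ (H.index : ℝ) := by exact_mod_cast Nat.one_le_iff_ne_zero.mpr h0
  rw [le_div_iff₀ (by linarith)]
  have h2 : (0 : ℝ) ≤ (dp p ↥H : ℝ) := Nat.cast_nonneg _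
  nlinarith

/-- `RG_p(G/⟪x⟫) ≥ RG_p(G) - 1`. -/
theorem pGradient_quotient_lower_bound_one (G : Type*) [Group G] [Group.FG G]
    (p : ℕ) (hp : p.Prime) (x : G) :
    pGradient p (G ⧸ Subgroup.normalClosure {x}) ≥ pGradient p G - 1 := by
  classical
  rw [ge_iff_le]
  set N := Subgroup.normalClosure {x} with hN
  haveI hNn : N.Normal := Subgroup.normalClosure_normal
  have hQne : {r : ℝ | ∃ H : Subgroup (G ⧸ N), H.Normal ∧ (∃ k : ℕ, H.index = p ^ k) ∧
      r = ((dp p H : ℝ) - 1) / (H.index : ℝ)}.Nonempty :=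
    ⟨_, ⟨⊤, inferInstance, ⟨0, by rw [Subgroup.index_top, pow_zero]⟩, rfl⟩⟩
  show pGradient p G - 1 ≤ sInf _
  refine le_csInf hQne ?_
  rintro r ⟨K, hKn, ⟨k, hk⟩, rfl⟩
  rw [sub_le_iff_le_add]
  have hidx0 : K.index ≠ 0 := by rw [hk]; exact pow_ne_zero _ hp.pos.ne'
  set π := QuotientGroup.mk' N with hπdef
  have hπ : Function.Surjective ⇑π := QuotientGroup.mk'_surjective N
  set H := Subgroup.comap π K with hHdef
  haveI hHn : H.Normal := hKn.comap π
  have hHidx : H.index = K.index := Subgroup.index_comap_of_surjective K hπ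
  haveI : K.FiniteIndex := ⟨hidx0⟩
  haveI : H.FiniteIndex := ⟨by rw [hHidx]; exact hidx0⟩
  haveI : Group.FG (G ⧸ N) := Group.fg_of_surjective hπ
  haveI : Group.FG ↥K := Subgroup.fg_of_index_ne_zero K
  haveI : Finite (G ⧸ H) := H.finite_quotient_of_finiteIndex
  haveI : Fintype (G ⧸ H) := Fintype.ofFinite _
  set φ := π.comp H.subtype with hφdef
  have hrange : φ.range = K := by
    rw [hφdef, MonoidHom.range_comp, Subgroup.range_subtype, hHdef,
      Subgroup.map_comap_eq_self_of_surjective hπ]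
  have hkerφ : φ.ker = Subgroup.comap H.subtype N := by
    rw [hφdef, ← MonoidHom.comap_ker, hπdef, QuotientGroup.ker_mk']
  have hxN : x ∈ N := Subgroup.subset_normalClosure (Set.mem_singleton x)
  have hπx : π x = 1 := by
    rw [hπdef]
    exact (QuotientGroup.eq_one_iff x).mpr hxN
  have hNH : N ≤ H := by
    intro g hg
    rw [hHdef, Subgroup.mem_comap]
    have hg1 : π g = 1 := by
      rw [hπdef]
      exact (QuotientGroup.eq_one_iff g).mpr hg
    rw [hg1]
    exact K.one_mem
  have hconjmem : ∀ q : G ⧸ H, (Quotient.out q)⁻¹ * x * Quotient.out q ∈ H := by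
    intro q
    apply hNH
    have h1 := hNn.conj_mem x hxN (Quotient.out q)⁻¹
    rwa [inv_inv] at h1
  set c : G ⧸ H → ↥H := fun q => ⟨(Quotient.out q)⁻¹ * x * Quotient.out q, hconjmem q⟩ with hc
  set M := Subgroup.normalClosure (Set.range c) with hM
  haveI hMn : M.Normal := Subgroup.normalClosure_normal
  have hMker : φ.ker = M := by
    apply le_antisymm
    · intro h hh
      have hhN : (h : G) ∈ N := by rw [hkerφ] at hh; exact hh
      have hle : N ≤ Subgroup.map H.subtype M := by
        rw [hN]
        show Subgroup.closure (Group.conjugatesOfSet {x}) ≤ _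
        rw [Subgroup.closure_le]
        intro y hy
        rw [Group.mem_conjugatesOfSet_iff] at hy
        obtain ⟨b, hb, hconj⟩ := hy
        rw [Set.mem_singleton_iff] at hb
        rw [hb] at hconj
        obtain ⟨g, hg⟩ := isConj_iff.mp hconj
        set q : G ⧸ H := QuotientGroup.mk g⁻¹ with hq
        have h1 : ((Quotient.out q : G) : G ⧸ H) = QuotientGroup.mk g⁻¹ := by
          rw [QuotientGroup.out_eq' q, hq]
        have h2 : (Quotient.out q)⁻¹ * g⁻¹ ∈ H := QuotientGroup.eq.mp h1
        have hgs : g * Quotient.out q ∈ H := by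
          have h3 := H.inv_mem h2
          rwa [mul_inv_rev, inv_inv, inv_inv] at h3
        refine ⟨(⟨g * Quotient.out q, hgs⟩ : ↥H) * c q * (⟨g * Quotient.out q, hgs⟩ : ↥H)⁻¹,
          hMn.conj_mem _ (Subgroup.subset_normalClosure ⟨q, rfl⟩) _, ?_⟩
        show (g * Quotient.out q) * ((Quotient.out q)⁻¹ * x * Quotient.out q) *
          (g * Quotient.out q)⁻¹ = y
        rw [← hg]
        group
      obtain ⟨m, hm, hme⟩ := hle hhN
      have hmh : m = h := Subtype.ext hme
      rwa [← hmh]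
    · apply Subgroup.normalClosure_le_normal
      rintro _ ⟨q, rfl⟩
      rw [SetLike.mem_coe, MonoidHom.mem_ker]
      show π ((Quotient.out q)⁻¹ * x * Quotient.out q) = 1
      rw [map_mul, map_mul, map_inv, hπx]
      group
  have e : (↥H ⧸ M) ≃* ↥K :=
    (QuotientGroup.quotientMulEquivOfEq hMker.symm).trans
      ((QuotientGroup.quotientKerEquivRange φ).trans (MulEquiv.subgroupCongr hrange))
  haveI : Group.FG (↥H ⧸ M) := Group.fg_of_surjective (f := e.symm.toMonoidHom) e.symm.surjective
  set S : Finset ↥H := Finset.image c Finset.univ with hS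
  have hScoe : (S : Set ↥H) = Set.range c := by rw [hS]; simp
  have hkey : dp p ↥H ≤ dp p (↥H ⧸ M) + S.card :=
    dp_le_quot p M S (by rw [hScoe])
  have hSc : S.card ≤ H.index := by
    have h1 : S.card ≤ Fintype.card (G ⧸ H) := by
      rw [hS]
      exact Finset.card_image_le.trans (le_of_eq Finset.card_univ)
    have h2 : H.index = Fintype.card (G ⧸ H) := by
      rw [Subgroup.index_eq_card, Nat.card_eq_fintype_card]
    omega
  have hdpK : dp p (↥H ⧸ M) = dp p ↥K := dp_eq_of_mulEquiv p e
  have hkey2 : dp p ↥H ≤ dp p ↥K + K.index := by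
    rw [← hdpK, ← hHidx]
    omega
  have hmem : ((dp p ↥H : ℝ) - 1) / (H.index : ℝ) ∈ {r : ℝ | ∃ H' : Subgroup G, H'.Normal ∧
      (∃ k : ℕ, H'.index = p ^ k) ∧ r = ((dp p ↥H' : ℝ) - 1) / (H'.index : ℝ)} :=
    ⟨H, hHn, ⟨k, by rw [hHidx, hk]⟩, rfl⟩
  have hG1 : pGradient p G ≤ ((dp p ↥H : ℝ) - 1) / (H.index : ℝ) := by
    show sInf _ ≤ _
    exact csInf_le ⟨-1, fun r hr => pGradient_set_bddBelow hp r hr⟩ hmem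
  have hKpos : (0 : ℝ) < (K.index : ℝ) := by exact_mod_cast Nat.pos_of_ne_zero hidx0
  have hcast : (dp p ↥H : ℝ) ≤ (dp p ↥K : ℝ) + (K.index : ℝ) := by exact_mod_cast hkey2
  have harith : ((dp p ↥H : ℝ) - 1) / (H.index : ℝ) ≤
      ((dp p ↥K : ℝ) - 1) / (K.index : ℝ) + 1 := by
    rw [hHidx, div_le_iff₀ hKpos, add_mul, div_mul_cancel₀ _ hKpos.ne', one_mul]
    linarith
  linarith
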